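/- arXiv:1602.08468 — 4 statements merged into one kernel-verified Lean document; each statement's English description precedes it below -/
import Mathlib

section
/- Let G be a connected Lie group and (φ_t) a flow of automorphisms on G that is contracting, i.e., there exist constants c, μ > 0 such that ‖(dφ_t)_e X‖ ≤ c·e^{-μt}‖X‖ for all X in the Lie algebra 𝔤 and t ≥ 0. Then G is simply connected. -/
open Manifold

open Set Topology Filter Pointwise

set_option maxHeartbeats 2000000

/-- A connected Lie group admitting a contracting flow of automorphisms
is simply connected. -/
theorem stmt0
    {E : Type*} [NormedAddCommGroup E] [NormedSpace ℝ E] [FiniteDimensional ℝ E]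
    {G : Type*} [TopologicalSpace G] [ChartedSpace E G] [Group G]
    [IsManifold 𝓘(ℝ, E) (⊤ : ℕ∞) G] [LieGroup 𝓘(ℝ, E) (⊤ : ℕ∞) G] [ConnectedSpace G]
    (φ : ℝ → G ≃* G)
    (hsmooth : ∀ t, ContMDiff 𝓘(ℝ, E) 𝓘(ℝ, E) (⊤ : ℕ∞) (φ t))
    (hflow : ∀ s t : ℝ, ∀ g : G, φ (s + t) g = φ s (φ t g))
    (hcont_t : Continuous fun p : ℝ × G => φ p.1 p.2)
    (c μ : ℝ) (hc : 0 < c) (hμ : 0 < μ)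
    (hcontr : ∀ t : ℝ, 0 ≤ t → ∀ X : E,
      ‖(show E from mfderiv 𝓘(ℝ, E) 𝓘(ℝ, E) (φ t) 1 X)‖ ≤ c * Real.exp (-μ * t) * ‖X‖) :
    SimplyConnectedSpace G := by
  haveI : IsTopologicalGroup G := topologicalGroup_of_lieGroup 𝓘(ℝ, E) (⊤ : ℕ∞)
  have hφ1 : ∀ t, φ t (1 : G) = 1 := fun t => map_one (φ t)
  have hφ0 : ∀ g : G, φ 0 g = g := by
    intro g
    have := hflow 0 0 g
    rw [add_zero] at this
    exact ((φ 0).injective this.symm)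
  set ψ := chartAt E (1 : G) with hψ
  set x₀ := ψ 1 with hx₀
  -- choice of t₀
  set t₀ : ℝ := max 1 (Real.log (2 * c) / μ) with ht₀def
  have ht₀pos : 0 < t₀ := lt_of_lt_of_le one_pos (le_max_left _ _)
  have hA : ∀ X : E, ‖(show E from mfderiv 𝓘(ℝ, E) 𝓘(ℝ, E) (φ t₀) 1 X)‖ ≤ 2⁻¹ * ‖X‖ := by
    intro X
    refine (hcontr t₀ ht₀pos.le X).trans (mul_le_mul_of_nonneg_right ?_ (norm_nonneg X))
    have h1 : -μ * t₀ ≤ Real.log (2 * c)⁻¹ := by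
      rw [Real.log_inv]
      have : Real.log (2 * c) / μ ≤ t₀ := le_max_right _ _
      rw [div_le_iff₀ hμ] at this
      nlinarith
    calc c * Real.exp (-μ * t₀) ≤ c * (2 * c)⁻¹ := by
          refine mul_le_mul_of_nonneg_left ?_ hc.le
          calc Real.exp (-μ * t₀) ≤ Real.exp (Real.log (2 * c)⁻¹) := Real.exp_le_exp.2 h1
            _ = (2 * c)⁻¹ := Real.exp_log (by positivity)
      _ = 2⁻¹ := by field_simp
  -- the chart representative of φ t₀
  set Φ : E → E := ψ ∘ (φ t₀) ∘ ψ.symm with hΦdef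
  set S : Set E := ψ.target ∩ ψ.symm ⁻¹' (univ ∩ (φ t₀) ⁻¹' ψ.source) with hSdef
  have h1s : (1:G) ∈ ψ.source := mem_chart_source E 1
  have hx₀S : x₀ ∈ S := by
    refine ⟨ψ.map_source h1s, trivial, ?_⟩
    show φ t₀ (ψ.symm x₀) ∈ ψ.source
    rw [hx₀, ψ.left_inv h1s, hφ1]
    exact h1s
  have hSopen : IsOpen S := by
    rw [hSdef, univ_inter]
    exact ψ.symm.isOpen_inter_preimage (ψ.open_source.preimage (hsmooth t₀).continuous)
  have hΦdiff : ContDiffOn ℝ ((⊤:ℕ∞):WithTop ℕ∞) Φ S := by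
    have := (contMDiffOn_iff.1 ((hsmooth t₀).contMDiffOn (s := univ))).2 1 1
    simp only [extChartAt, OpenPartialHomeomorph.extend, modelWithCornersSelf_partialEquiv,
      PartialEquiv.trans_refl, univ_inter, OpenPartialHomeomorph.coe_coe,
      OpenPartialHomeomorph.coe_coe_symm] at this
    rw [hSdef, hΦdef, univ_inter]
    exact this
  have hΦx₀ : Φ x₀ = x₀ := by
    show ψ (φ t₀ (ψ.symm x₀)) = x₀
    rw [hx₀, ψ.left_inv h1s, hφ1]
  have hmd : MDifferentiableAt 𝓘(ℝ, E) 𝓘(ℝ, E) (φ t₀) 1 :=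
    ((hsmooth t₀) 1).mdifferentiableAt (by simp)
  have hfd : fderiv ℝ Φ x₀ = mfderiv 𝓘(ℝ, E) 𝓘(ℝ, E) (φ t₀) 1 := by
    simp only [mfderiv, hmd, if_true]
    simp only [writtenInExtChartAt, hφ1, extChartAt, OpenPartialHomeomorph.extend,
      modelWithCornersSelf_partialEquiv, PartialEquiv.trans_refl,
      modelWithCornersSelf_coe, Set.range_id, fderivWithin_univ,
      OpenPartialHomeomorph.coe_coe, OpenPartialHomeomorph.coe_coe_symm]
    rfl
  have hAop : ‖fderiv ℝ Φ x₀‖ ≤ 2⁻¹ := by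
    refine ContinuousLinearMap.opNorm_le_bound _ (by norm_num) fun X => ?_
    rw [hfd]
    exact hA X
  have hone : (1:WithTop ℕ∞) ≤ ((⊤:ℕ∞):WithTop ℕ∞) := by exact_mod_cast le_top
  have hfderivS : ∀ x ∈ S, DifferentiableAt ℝ Φ x := fun x hx =>
    ((hΦdiff.differentiableOn (by simp)).differentiableAt (hSopen.mem_nhds hx))
  have hcontfd : ContinuousOn (fun x => ‖fderiv ℝ Φ x‖) S :=
    (hΦdiff.continuousOn_fderiv_of_isOpen hSopen hone).norm
  obtain ⟨ε, hεpos, hεball⟩ : ∃ ε > 0,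
      Metric.closedBall x₀ ε ⊆ {x ∈ S | ‖fderiv ℝ Φ x‖ < 3/4} := by
    have hOopen : IsOpen {x ∈ S | ‖fderiv ℝ Φ x‖ < 3/4} := by
      have : {x ∈ S | ‖fderiv ℝ Φ x‖ < 3/4}
          = S ∩ (fun x => ‖fderiv ℝ Φ x‖) ⁻¹' (Iio (3/4)) := rfl
      rw [this]
      exact hcontfd.isOpen_inter_preimage hSopen isOpen_Iio
    have hx₀O : x₀ ∈ {x ∈ S | ‖fderiv ℝ Φ x‖ < 3/4} :=
      ⟨hx₀S, lt_of_le_of_lt hAop (by norm_num)⟩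
    exact (Metric.nhds_basis_closedBall.mem_iff).1 (hOopen.mem_nhds hx₀O)
  have hSsub : Metric.closedBall x₀ ε ⊆ S := fun x hx => (hεball hx).1
  have hcontract : ∀ x ∈ Metric.closedBall x₀ ε, ‖Φ x - x₀‖ ≤ 3/4 * ‖x - x₀‖ := by
    intro x hx
    have := (convex_closedBall x₀ ε).norm_image_sub_le_of_norm_fderiv_le
      (fun y hy => hfderivS y (hSsub hy)) (fun y hy => (hεball hy).2.le)
      (Metric.mem_closedBall_self hεpos.le) hx
    rwa [hΦx₀] at this
  have hstep : ∀ y ∈ S, φ t₀ (ψ.symm y) = ψ.symm (Φ y) := by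
    intro y hy
    have h1 : φ t₀ (ψ.symm y) ∈ ψ.source := hy.2.2
    have h2 : Φ y = ψ (φ t₀ (ψ.symm y)) := rfl
    rw [h2, ψ.left_inv h1]
  have hiter : ∀ y ∈ Metric.closedBall x₀ ε, ∀ n : ℕ,
      Φ^[n] y ∈ Metric.closedBall x₀ ((3/4)^n * ε) ∧
      φ (n * t₀) (ψ.symm y) = ψ.symm (Φ^[n] y) := by
    intro y hy n
    induction n with
    | zero => simpa using ⟨hy, hφ0 _⟩
    | succ n ih =>
      have hpow1 : ((3:ℝ)/4)^n ≤ 1 := pow_le_one₀ (by norm_num) (by norm_num)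
      have hsub : Metric.closedBall x₀ ((3/4)^n * ε) ⊆ Metric.closedBall x₀ ε :=
        Metric.closedBall_subset_closedBall (by nlinarith)
      have hyn : Φ^[n] y ∈ Metric.closedBall x₀ ε := hsub ih.1
      refine ⟨?_, ?_⟩
      · rw [Function.iterate_succ_apply']
        have h1 := hcontract _ hyn
        have h2 : ‖Φ^[n] y - x₀‖ ≤ (3/4)^n * ε := by
          have := ih.1
          rwa [Metric.mem_closedBall, dist_eq_norm] at this
        rw [Metric.mem_closedBall, dist_eq_norm]
        calc ‖Φ (Φ^[n] y) - x₀‖ ≤ 3/4 * ‖Φ^[n] y - x₀‖ := h1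
          _ ≤ 3/4 * ((3/4)^n * ε) := by nlinarith
          _ = (3/4)^(n+1) * ε := by ring
      · have harith : ((n+1:ℕ):ℝ) * t₀ = t₀ + (n:ℕ) * t₀ := by push_cast; ring
        rw [harith, hflow, ih.2, hstep _ (hSsub hyn), Function.iterate_succ_apply']
  -- the basic neighborhood of 1
  set V : Set G := ψ.source ∩ ψ ⁻¹' (Metric.ball x₀ ε) with hVdef
  have hVmem : V ∈ 𝓝 (1:G) := by
    apply Filter.inter_mem (ψ.open_source.mem_nhds h1s)
    exact (ψ.continuousAt h1s).preimage_mem_nhds (Metric.ball_mem_nhds x₀ hεpos)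
  have hconv1 : ∀ U ∈ 𝓝 (1:G), ∀ᶠ t in Filter.atTop, ∀ h ∈ V, φ t h ∈ U := by
    intro U hU
    -- tube lemma: uniform continuity over r ∈ [0, t₀]
    obtain ⟨V', hV'mem, hV'⟩ : ∃ V' ∈ 𝓝 (1:G), ∀ r ∈ Icc (0:ℝ) t₀, ∀ x ∈ V', φ r x ∈ U := by
      have hOopen : IsOpen ((fun p : ℝ × G => φ p.1 p.2) ⁻¹' interior U) :=
        hcont_t.isOpen_preimage _ isOpen_interior
      have hsub : Icc (0:ℝ) t₀ ×ˢ ({1} : Set G) ⊆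
          (fun p : ℝ × G => φ p.1 p.2) ⁻¹' interior U := by
        rintro ⟨r, x⟩ ⟨-, hx⟩
        simp only [mem_singleton_iff] at hx
        simp only [mem_preimage, hx, hφ1]
        exact mem_interior_iff_mem_nhds.2 hU
      obtain ⟨u, v, -, hvopen, hIu, h1v, huv⟩ :=
        generalized_tube_lemma isCompact_Icc isCompact_singleton hOopen hsub
      exact ⟨v, hvopen.mem_nhds (h1v rfl), fun r hr x hxv =>
        interior_subset (huv (Set.mk_mem_prod (hIu hr) hxv))⟩
    -- shrink to a closed ball in the chart
    obtain ⟨δ, hδpos, hδ⟩ : ∃ δ > 0, ∀ g ∈ ψ.source, ψ g ∈ Metric.closedBall x₀ δ → g ∈ V' := by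
      have hc1 : ContinuousAt ψ.symm x₀ := ψ.symm.continuousAt (ψ.map_source h1s)
      have hx1 : ψ.symm x₀ = 1 := ψ.left_inv h1s
      have : ψ.symm ⁻¹' V' ∈ 𝓝 x₀ := hc1.preimage_mem_nhds (by rwa [hx1])
      obtain ⟨δ, hδpos, hδ⟩ := (Metric.nhds_basis_closedBall.mem_iff).1 this
      exact ⟨δ, hδpos, fun g hg hgball => by
        have := hδ hgball
        rwa [mem_preimage, ψ.left_inv hg] at this⟩
    -- choose n₀
    obtain ⟨n₀, hn₀⟩ : ∃ n₀ : ℕ, (3/4:ℝ)^n₀ * ε ≤ δ := by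
      have htend : Filter.Tendsto (fun n : ℕ => (3/4:ℝ)^n * ε) Filter.atTop (𝓝 (0 * ε)) :=
        (tendsto_pow_atTop_nhds_zero_of_lt_one (by norm_num) (by norm_num)).mul_const ε
      rw [zero_mul] at htend
      exact ((htend.eventually (gt_mem_nhds hδpos)).exists.imp fun n h => h.le)
    filter_upwards [Filter.eventually_ge_atTop ((n₀:ℝ) * t₀)] with t ht h hh
    set n : ℕ := ⌊t / t₀⌋₊ with hndef
    have htnonneg : 0 ≤ t := le_trans (by positivity) ht
    have hn₀n : (n₀:ℝ) ≤ (n:ℝ) := by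
      have : (n₀:ℝ) ≤ t / t₀ := (le_div_iff₀ ht₀pos).2 ht
      exact_mod_cast Nat.cast_le.2 (Nat.le_floor this)
    have hfl1 : (n:ℝ) * t₀ ≤ t := by
      have := Nat.floor_le (div_nonneg htnonneg ht₀pos.le)
      calc (n:ℝ) * t₀ ≤ t / t₀ * t₀ := by nlinarith
        _ = t := div_mul_cancel₀ t ht₀pos.ne'
    have hfl2 : t - (n:ℝ) * t₀ ≤ t₀ := by
      have := Nat.lt_floor_add_one (t / t₀)
      have h2 : t / t₀ < n + 1 := by exact_mod_cast this
      nlinarith [(div_lt_iff₀ ht₀pos).1 h2]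
    have hhball : ψ h ∈ Metric.closedBall x₀ ε := Metric.ball_subset_closedBall hh.2
    obtain ⟨hit1, hit2⟩ := hiter (ψ h) hhball n
    have hsymmh : ψ.symm (ψ h) = h := ψ.left_inv hh.1
    rw [hsymmh] at hit2
    -- φ (n t₀) h lies in V'
    have hinV' : φ ((n:ℝ) * t₀) h ∈ V' := by
      have hmemS : Φ^[n] (ψ h) ∈ S := hSsub (by
        refine Metric.closedBall_subset_closedBall ?_ hit1
        have hpow1 : ((3:ℝ)/4)^n ≤ 1 := pow_le_one₀ (by norm_num) (by norm_num)
        nlinarith)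
      have hsrc : ψ.symm (Φ^[n] (ψ h)) ∈ ψ.source := ψ.map_target hmemS.1
      have hrv : ψ (ψ.symm (Φ^[n] (ψ h))) = Φ^[n] (ψ h) := ψ.right_inv hmemS.1
      rw [hit2]
      refine hδ _ hsrc ?_
      rw [hrv]
      refine Metric.closedBall_subset_closedBall ?_ hit1
      calc ((3:ℝ)/4)^n * ε ≤ (3/4)^n₀ * ε := by
            have : ((3:ℝ)/4)^n ≤ (3/4)^n₀ := by
              apply pow_le_pow_of_le_one (by norm_num) (by norm_num)
              exact_mod_cast hn₀n
            nlinarith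
        _ ≤ δ := hn₀
    have hsplit : φ t h = φ (t - (n:ℝ) * t₀) (φ ((n:ℝ) * t₀) h) := by
      rw [← hflow, sub_add_cancel]
    rw [hsplit]
    exact hV' _ ⟨by linarith, hfl2⟩ _ hinV'
  -- the basin of locally-uniform attraction is an open subgroup
  set Ω : Set G := {g | ∃ W ∈ 𝓝 g, ∀ U ∈ 𝓝 (1:G), ∀ᶠ t in Filter.atTop, ∀ h ∈ W, φ t h ∈ U}
    with hΩdef
  have h1Ω : (1:G) ∈ Ω := ⟨V, hVmem, hconv1⟩
  have hΩopen : IsOpen Ω := by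
    rw [isOpen_iff_mem_nhds]
    rintro g ⟨W, hW, hWc⟩
    refine Filter.mem_of_superset (interior_mem_nhds.2 hW) fun h hh => ?_
    exact ⟨W, mem_interior_iff_mem_nhds.1 hh, hWc⟩
  have hΩmul : ∀ g₁ ∈ Ω, ∀ g₂ ∈ Ω, g₁ * g₂ ∈ Ω := by
    rintro g₁ ⟨W₁, hW₁, h₁⟩ g₂ ⟨W₂, hW₂, h₂⟩
    refine ⟨W₁ * W₂, ?_, ?_⟩
    · refine Filter.mem_of_superset ((isOpenMap_mul_left g₁).image_mem_nhds hW₂) ?_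
      rintro _ ⟨b, hb, rfl⟩
      exact Set.mul_mem_mul (mem_of_mem_nhds hW₁) hb
    · intro U hU
      obtain ⟨U₂, hU₂open, hU₂1, hU₂⟩ := exists_open_nhds_one_mul_subset hU
      filter_upwards [h₁ U₂ (hU₂open.mem_nhds hU₂1), h₂ U₂ (hU₂open.mem_nhds hU₂1)]
        with t ht₁ ht₂ h hh
      obtain ⟨a, ha, b, hb, rfl⟩ := hh
      rw [map_mul]
      exact hU₂ (Set.mul_mem_mul (ht₁ a ha) (ht₂ b hb))
  have hΩinv : ∀ g ∈ Ω, g⁻¹ ∈ Ω := by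
    rintro g ⟨W, hW, h₁⟩
    refine ⟨(·⁻¹) ⁻¹' W, ?_, ?_⟩
    · apply (continuous_inv.continuousAt).preimage_mem_nhds
      rwa [inv_inv]
    · intro U hU
      have hU' : (·⁻¹) ⁻¹' U ∈ 𝓝 (1:G) := by
        apply (continuous_inv.continuousAt).preimage_mem_nhds
        rwa [inv_one]
      filter_upwards [h₁ _ hU'] with t ht h hh
      have := ht h⁻¹ hh
      rw [mem_preimage, ← map_inv] at this
      rwa [inv_inv] at this
  have hΩuniv : Ω = univ := by
    have hΓ : ∃ Γ : Subgroup G, (Γ : Set G) = Ω :=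
      ⟨{ carrier := Ω, one_mem' := h1Ω,
         mul_mem' := fun ha hb => hΩmul _ ha _ hb,
         inv_mem' := fun ha => hΩinv _ ha }, rfl⟩
    obtain ⟨Γ, hΓ⟩ := hΓ
    have hclosed : IsClosed Ω := by
      have := Subgroup.isClosed_of_isOpen Γ (by rw [hΓ]; exact hΩopen)
      rwa [hΓ] at this
    exact IsClopen.eq_univ ⟨hclosed, hΩopen⟩ ⟨1, h1Ω⟩
  -- build the contraction homotopy
  set H : unitInterval × G → G :=
    fun p => if p.1 = 1 then 1 else φ ((p.1 : ℝ) / (1 - (p.1 : ℝ))) p.2 with hHdef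
  have hHcont : Continuous H := by
    rw [continuous_iff_continuousAt]
    intro p
    by_cases hp : p.1 = 1
    · -- near s = 1 : use locally uniform convergence
      intro U hU
      rw [hHdef] at hU ⊢
      simp only [if_pos hp] at hU
      obtain ⟨W, hW, hWc⟩ : p.2 ∈ Ω := hΩuniv ▸ mem_univ p.2
      obtain ⟨T, hT⟩ := Filter.eventually_atTop.1 (hWc U hU)
      set T' : ℝ := max T 0 with hT'def
      have hT'0 : 0 ≤ T' := le_max_right _ _
      have hN1 : {s : unitInterval | T' / (T' + 1) < (s:ℝ)} ∈ 𝓝 p.1 := by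
        apply (isOpen_Ioi.preimage continuous_subtype_val).mem_nhds
        show T' / (T' + 1) < (p.1 : ℝ)
        rw [hp]
        show T' / (T' + 1) < 1
        rw [div_lt_one (by linarith)]
        linarith
      rw [Filter.mem_map]
      refine Filter.mem_of_superset (prod_mem_nhds hN1 hW) ?_
      rintro ⟨s, x⟩ ⟨hs, hx⟩
      simp only [mem_preimage]
      by_cases hs1 : s = 1
      · simp only [if_pos hs1]
        exact mem_of_mem_nhds hU
      · simp only [if_neg hs1]
        have hslt : (s:ℝ) < 1 :=
          lt_of_le_of_ne s.2.2 (fun h => hs1 (Set.Icc.coe_eq_one.1 h))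
        have hden : (0:ℝ) < 1 - s := by linarith
        have hsmem : T' / (T' + 1) < (s:ℝ) := hs
        have hge : T ≤ (s:ℝ) / (1 - (s:ℝ)) := by
          have h1 : T' * (1 - (s:ℝ)) ≤ (s:ℝ) := by
            rw [div_lt_iff₀ (by linarith : (0:ℝ) < T' + 1)] at hsmem
            nlinarith
          have h2 : T' ≤ (s:ℝ) / (1 - (s:ℝ)) := by
            rw [le_div_iff₀ hden]
            linarith
          exact le_trans (le_max_left _ _) h2
        exact hT _ hge _ hx
    · -- away from s = 1 : direct continuity
      have hopen : IsOpen {q : unitInterval × G | q.1 ≠ 1} :=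
        (isClosed_singleton.preimage continuous_fst).isOpen_compl
      have hbase : ContinuousAt (fun q : unitInterval × G =>
          φ ((q.1 : ℝ) / (1 - (q.1 : ℝ))) q.2) p := by
        have hden : (1:ℝ) - (p.1 : ℝ) ≠ 0 := by
          intro h
          exact hp (Set.Icc.coe_eq_one.1 (by linarith [sub_eq_zero.1 h]))
        have hτ : ContinuousAt (fun q : unitInterval × G =>
            (((q.1 : ℝ) / (1 - (q.1 : ℝ))), q.2)) p := by
          apply ContinuousAt.prodMk
          · exact ContinuousAt.div
              (continuous_subtype_val.comp continuous_fst).continuousAt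
              ((continuous_const.sub (continuous_subtype_val.comp continuous_fst)).continuousAt)
              hden
          · exact continuous_snd.continuousAt
        exact (hcont_t.continuousAt).comp hτ
      refine hbase.congr ?_
      filter_upwards [hopen.mem_nhds hp] with q hq
      rw [hHdef]
      simp only [if_neg hq]
  have h01 : (0 : unitInterval) ≠ 1 := by
    intro h
    have := congrArg (Subtype.val) h
    norm_num at this
  have hnull : (ContinuousMap.id G).Nullhomotopic := by
    refine ⟨1, ⟨{ toContinuousMap := ⟨H, hHcont⟩
                  map_zero_left := fun x => ?_
                  map_one_left := fun x => ?_ }⟩⟩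
    · show H (0, x) = x
      rw [hHdef]
      simp only [if_neg h01]
      norm_num
      exact hφ0 x
    · show H (1, x) = 1
      rw [hHdef]
      simp
  haveI : ContractibleSpace G := (contractible_iff_id_nullhomotopic G).2 hnull
  infer_instance
end

section
/- Let G be a topological group and H₁, H₂ closed subgroups with G = H₁H₂ and H₁ ∩ H₂ = {e}, and suppose that for every pair of neighborhoods U₁ of e in H₁ and U₂ of e in H₂ there exist neighborhoods V₁ ⊆ U₁, V₂ ⊆ U₂ such that V₁V₂ is open in G. If (x_n) is a sequence in G with unique decompositions x_n = h_{1,n}h_{2,n} (h_{i,n} ∈ H_i), then x_n → x if and only if h_{1,n} → h₁ and h_{2,n} → h₂, where x = h₁h₂ is the unique decomposition of x. -/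
/-- convergence in a topological group with a unique product decomposition
by two closed subgroups is equivalent to convergence of the components. -/
theorem stmt2
    {G : Type*} [Group G] [TopologicalSpace G] [IsTopologicalGroup G]
    (H₁ H₂ : Subgroup G) (h₁c : IsClosed (H₁ : Set G)) (h₂c : IsClosed (H₂ : Set G))
    (hdec : ∀ g : G, ∃! p : H₁ × H₂, (p.1 : G) * (p.2 : G) = g)
    (hopen : ∀ U₁ ∈ nhds (1 : H₁), ∀ U₂ ∈ nhds (1 : H₂),
      ∃ V₁ ∈ nhds (1 : H₁), ∃ V₂ ∈ nhds (1 : H₂), V₁ ⊆ U₁ ∧ V₂ ⊆ U₂ ∧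
        IsOpen ((fun p : H₁ × H₂ => (p.1 : G) * (p.2 : G)) '' (V₁ ×ˢ V₂)))
    (x : ℕ → G) (h : ℕ → H₁ × H₂) (hx : ∀ n, ((h n).1 : G) * ((h n).2 : G) = x n)
    (l : G) (p : H₁ × H₂) (hl : (p.1 : G) * (p.2 : G) = l) :
    Filter.Tendsto x Filter.atTop (nhds l) ↔
      Filter.Tendsto (fun n => (h n).1) Filter.atTop (nhds p.1) ∧
      Filter.Tendsto (fun n => (h n).2) Filter.atTop (nhds p.2) := by
  constructor
  · intro hxl
    have comp : ∀ W₁ ∈ nhds p.1, ∀ W₂ ∈ nhds p.2,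
        ∀ᶠ n in Filter.atTop, (h n).1 ∈ W₁ ∧ (h n).2 ∈ W₂ := by
      intro W₁ hW₁ W₂ hW₂
      have hU₁ : (fun u : H₁ => p.1 * u) ⁻¹' W₁ ∈ nhds (1 : H₁) := by
        apply (continuous_mul_left p.1).continuousAt.preimage_mem_nhds
        simpa using hW₁
      have hU₂ : (fun u : H₂ => u * p.2) ⁻¹' W₂ ∈ nhds (1 : H₂) := by
        apply (continuous_mul_right p.2).continuousAt.preimage_mem_nhds
        simpa using hW₂
      obtain ⟨V₁, hV₁, V₂, hV₂, hV₁U, hV₂U, hVopen⟩ := hopen _ hU₁ _ hU₂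
      set S : Set G := (fun g => (p.1 : G)⁻¹ * g * (p.2 : G)⁻¹) ⁻¹'
        ((fun q : H₁ × H₂ => (q.1 : G) * (q.2 : G)) '' (V₁ ×ˢ V₂)) with hS
      have hSopen : IsOpen S := hVopen.preimage (by continuity)
      have hlS : l ∈ S := by
        simp only [hS, Set.mem_preimage]
        refine ⟨(1, 1), ⟨mem_of_mem_nhds hV₁, mem_of_mem_nhds hV₂⟩, ?_⟩
        rw [← hl]
        push_cast
        group
      have hev := hxl.eventually (hSopen.mem_nhds hlS)
      filter_upwards [hev] with n hn
      obtain ⟨⟨v₁, v₂⟩, hvmem, hveq⟩ := hn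
      have hxn : ((p.1 * v₁ : H₁) : G) * ((v₂ * p.2 : H₂) : G) = x n := by
        push_cast
        have hveq' : (v₁ : G) * (v₂ : G) = (p.1 : G)⁻¹ * x n * (p.2 : G)⁻¹ := hveq
        have : (p.1 : G) * ((v₁ : G) * (v₂ : G)) * (p.2 : G) = x n := by
          rw [hveq']; group
        rw [← this]; group
      obtain ⟨q, hq, huniq⟩ := hdec (x n)
      have e1 : h n = q := huniq _ (hx n)
      have e2 : ((p.1 * v₁, v₂ * p.2) : H₁ × H₂) = q := huniq _ hxn
      rw [e1, ← e2]
      exact ⟨hV₁U hvmem.1, hV₂U hvmem.2⟩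
    constructor
    · intro W hW
      exact Filter.mem_map.2 ((comp W hW Set.univ Filter.univ_mem).mono fun n hn => hn.1)
    · intro W hW
      exact Filter.mem_map.2 ((comp Set.univ Filter.univ_mem W hW).mono fun n hn => hn.2)
  · rintro ⟨h1, h2⟩
    have ht := ((continuous_subtype_val.tendsto p.1).comp h1).mul
      ((continuous_subtype_val.tendsto p.2).comp h2)
    rw [hl] at ht
    exact ht.congr fun n => hx n
end

section
/- Let G be a connected nilpotent Lie group with a hyperbolic flow of automorphisms (φ_t) (the associated derivation D has no purely imaginary eigenvalues), with stable subgroup G⁻ and unstable subgroup G⁺ satisfying G = G⁻G⁺ and G⁺ ∩ G⁻ = {e}. Then for g ∈ G: lim_{t→∞} φ_t(g) = e if and only if g ∈ G⁻. -/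
/-- for a hyperbolic flow of automorphisms on a connected nilpotent Lie group
(with left-invariant distance, stable subgroup `Gm`, unstable subgroup `Gp`, the unique
product decomposition `G = G⁻G⁺` and the contraction/expansion estimates), an element
converges to the identity under the flow iff it lies in the stable subgroup. -/
theorem stmt11
    {G : Type*} [Group G] [MetricSpace G] [IsTopologicalGroup G] [ConnectedSpace G]
    [Group.IsNilpotent G]
    (hinv : ∀ a g h : G, dist (a * g) (a * h) = dist g h)
    (φ : ℝ → G ≃* G)
    (hflow : ∀ s t : ℝ, ∀ g : G, φ (s + t) g = φ s (φ t g))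
    (hφcont : ∀ t, Continuous (φ t))
    (Gm Gp : Subgroup G)
    (hGmc : IsClosed (Gm : Set G)) (hGpc : IsClosed (Gp : Set G))
    (hinvm : ∀ t : ℝ, ∀ g ∈ Gm, φ t g ∈ Gm) (hinvp : ∀ t : ℝ, ∀ g ∈ Gp, φ t g ∈ Gp)
    (hdec : ∀ g : G, ∃! p : Gm × Gp, (p.1 : G) * (p.2 : G) = g)
    (c μ : ℝ) (hc : 0 < c) (hμ : 0 < μ)
    (hcontr : ∀ t : ℝ, 0 ≤ t → ∀ g ∈ Gm, ∀ h ∈ Gm,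
      dist (φ t g) (φ t h) ≤ c⁻¹ * Real.exp (-μ * t) * dist g h)
    (hexp : ∀ t : ℝ, 0 ≤ t → ∀ g ∈ Gp, ∀ h ∈ Gp,
      c * Real.exp (μ * t) * dist g h ≤ dist (φ t g) (φ t h))
    (g : G) :
    Filter.Tendsto (fun t : ℝ => φ t g) Filter.atTop (nhds 1) ↔ g ∈ Gm := by
  have key : ∀ x ∈ Gm, Filter.Tendsto (fun t : ℝ => φ t x) Filter.atTop (nhds 1) := by
    intro x hx
    rw [tendsto_iff_dist_tendsto_zero]
    apply squeeze_zero' (Filter.Eventually.of_forall fun t => dist_nonneg)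
      (g := fun t => c⁻¹ * Real.exp (-μ * t) * dist x 1)
    · filter_upwards [Filter.eventually_ge_atTop (0 : ℝ)] with t ht
      have := hcontr t ht x hx 1 (one_mem _)
      rwa [map_one] at this
    · have he : Filter.Tendsto (fun t : ℝ => Real.exp (-μ * t)) Filter.atTop (nhds 0) := by
        have h1 : Filter.Tendsto (fun t : ℝ => μ * t) Filter.atTop Filter.atTop :=
          Filter.Tendsto.const_mul_atTop hμ Filter.tendsto_id
        exact (Real.tendsto_exp_neg_atTop_nhds_zero.comp h1).congr
          (fun t => by simp [Function.comp, neg_mul])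
      have := (he.const_mul c⁻¹).mul_const (dist x 1)
      simpa using this
  constructor
  · intro h
    obtain ⟨⟨m, p⟩, hmp, -⟩ := hdec g
    suffices hp : (p : G) = 1 by
      rw [← hmp, hp, mul_one]; exact m.2
    have hm := key m m.2
    have hptend : Filter.Tendsto (fun t : ℝ => φ t (p : G)) Filter.atTop (nhds 1) := by
      have heq : (fun t : ℝ => φ t (p : G)) = fun t => (φ t (m : G))⁻¹ * φ t g := by
        funext t
        rw [← hmp, map_mul]
        group
      rw [heq]
      simpa using hm.inv.mul h
    by_contra hp
    have hd : 0 < dist (p : G) 1 := dist_pos.2 hp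
    have hdist := tendsto_iff_dist_tendsto_zero.1 hptend
    have hev : ∀ᶠ t : ℝ in Filter.atTop, dist (φ t (p : G)) 1 < c * dist (p : G) 1 := by
      have : (0 : ℝ) < c * dist (p : G) 1 := by positivity
      exact hdist.eventually (gt_mem_nhds this)
    obtain ⟨t, ht, ht0⟩ := (hev.and (Filter.eventually_ge_atTop (0 : ℝ))).exists
    have hle := hexp t ht0 p p.2 1 (one_mem _)
    rw [map_one] at hle
    have hexp1 : (1 : ℝ) ≤ Real.exp (μ * t) := Real.one_le_exp (by positivity)
    nlinarith [mul_nonneg (mul_nonneg (sub_nonneg.2 hexp1) hc.le) hd.le]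
  · intro hg
    exact key g hg
end

section
/- For a flow of automorphisms (φ_t) on a connected Lie group G with left-invariant Riemannian metric, the Lyapunov exponent λ(g, v) = limsup_{t→∞} (1/t) log ‖(dφ_t)_g(v)‖ satisfies λ(g, v) = λ(e, (dL_{g⁻¹})_g(v)) for all g ∈ G and v ∈ T_gG; in particular, Lyapunov exponents are determined by the linear flow e^{tD} on the Lie algebra. -/
open Manifold

/-- for a flow of automorphisms on a Lie group with left-invariant metric,
the Lyapunov exponent satisfies `λ(g, v) = λ(e, (dL_{g⁻¹})_g v)`; in particular the
Lyapunov exponents are determined by the linear flow `e^{tD}` on the Lie algebra. -/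
theorem stmt17
    {E : Type*} [NormedAddCommGroup E] [NormedSpace ℝ E] [FiniteDimensional ℝ E]
    {G : Type*} [TopologicalSpace G] [ChartedSpace E G] [Group G]
    [IsManifold 𝓘(ℝ, E) (⊤ : ℕ∞) G] [LieGroup 𝓘(ℝ, E) (⊤ : ℕ∞) G] [ConnectedSpace G]
    (φ : ℝ → G ≃* G)
    (hsmooth : ∀ t, ContMDiff 𝓘(ℝ, E) 𝓘(ℝ, E) (⊤ : ℕ∞) (φ t))
    (hflow : ∀ s t : ℝ, ∀ g : G, φ (s + t) g = φ s (φ t g))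
    (D : E →L[ℝ] E)
    (hD : ∀ (t : ℝ) (X : E),
      (show E from mfderiv 𝓘(ℝ, E) 𝓘(ℝ, E) (φ t) 1 (show TangentSpace 𝓘(ℝ, E) (1 : G) from X))
        = NormedSpace.exp (t • D) X)
    -- the norm of a tangent vector `w` at `x` in the left-invariant metric:
    (nrm : (x : G) → E → ℝ)
    (hnrm : ∀ (x : G) (w : E), nrm x w =
      ‖(show E from mfderiv 𝓘(ℝ, E) 𝓘(ℝ, E) (fun y => x⁻¹ * y) x
          (show TangentSpace 𝓘(ℝ, E) x from w))‖)
    (g : G) (v : E) :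
    Filter.limsup (fun t : ℝ => t⁻¹ * Real.log (nrm (φ t g)
        (show E from mfderiv 𝓘(ℝ, E) 𝓘(ℝ, E) (φ t) g (show TangentSpace 𝓘(ℝ, E) g from v))))
        Filter.atTop
      = Filter.limsup (fun t : ℝ => t⁻¹ * Real.log (nrm (1 : G)
          (show E from mfderiv 𝓘(ℝ, E) 𝓘(ℝ, E) (φ t) 1
            (show TangentSpace 𝓘(ℝ, E) (1 : G) from
              (show E from mfderiv 𝓘(ℝ, E) 𝓘(ℝ, E) (fun y => g⁻¹ * y) g
                (show TangentSpace 𝓘(ℝ, E) g from v)))))) Filter.atTop ∧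
    ∀ X : E,
      Filter.limsup (fun t : ℝ => t⁻¹ * Real.log (nrm (1 : G)
          (show E from mfderiv 𝓘(ℝ, E) 𝓘(ℝ, E) (φ t) 1
            (show TangentSpace 𝓘(ℝ, E) (1 : G) from X)))) Filter.atTop
        = Filter.limsup
            (fun t : ℝ => t⁻¹ * Real.log ‖NormedSpace.exp (t • D) X‖) Filter.atTop := by
  have hφd : ∀ (t : ℝ) (x : G), MDifferentiableAt 𝓘(ℝ, E) 𝓘(ℝ, E) (φ t) x :=
    fun t x => (hsmooth t).mdifferentiableAt (by simp)
  have hLd : ∀ (a x : G), MDifferentiableAt 𝓘(ℝ, E) 𝓘(ℝ, E) (fun y => a * y) x :=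
    fun a x => (contMDiff_mul_left (n := ((⊤ : ℕ∞) : WithTop ℕ∞)) (a := a)).mdifferentiableAt (by simp)
  -- nrm at 1 is just the norm
  have hnrm1 : ∀ w : E, nrm (1 : G) w = ‖w‖ := by
    intro w
    rw [hnrm]
    have : (fun y : G => (1 : G)⁻¹ * y) = id := by funext y; simp
    rw [this, mfderiv_id]
    rfl
  constructor
  · apply congrArg (fun f => Filter.limsup f Filter.atTop)
    funext t
    congr 1
    -- main geometric identity
    rw [hnrm, hnrm1]
    have key : (fun y : G => (φ t g)⁻¹ * φ t y) = fun y : G => φ t (g⁻¹ * y) := by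
      funext y; simp
    have h1 : mfderiv 𝓘(ℝ, E) 𝓘(ℝ, E) ((fun y : G => (φ t g)⁻¹ * y) ∘ (φ t)) g
        = (mfderiv 𝓘(ℝ, E) 𝓘(ℝ, E) (fun y : G => (φ t g)⁻¹ * y) (φ t g)).comp
            (mfderiv 𝓘(ℝ, E) 𝓘(ℝ, E) (φ t) g) :=
      mfderiv_comp g (hLd _ _) (hφd _ _)
    have h2 : mfderiv 𝓘(ℝ, E) 𝓘(ℝ, E) ((φ t) ∘ (fun y : G => g⁻¹ * y)) g
        = (mfderiv 𝓘(ℝ, E) 𝓘(ℝ, E) (φ t) (1 : G)).comp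
            (mfderiv 𝓘(ℝ, E) 𝓘(ℝ, E) (fun y : G => g⁻¹ * y) g) := by
      have h := mfderiv_comp g (hφd t _) (hLd g⁻¹ g)
      rw [inv_mul_cancel] at h; exact h
    have hfun : ((fun y : G => (φ t g)⁻¹ * y) ∘ (φ t)) = ((φ t) ∘ (fun y : G => g⁻¹ * y)) := by
      funext y; simp [Function.comp]
    rw [hfun] at h1
    rw [h1] at h2
    exact congrArg (fun w : E => Real.log ‖w‖) (congrFun (congrArg DFunLike.coe h2) v)
  · intro X
    apply congrArg (fun f => Filter.limsup f Filter.atTop)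
    funext t
    rw [hnrm1, hD]
end
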